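/- Inverse relation for the φ- and φ'-exponentials: for z ∈ ℂ, if the series defining exp_{s,t}(z,φ) and exp_{s,t}(−z,φ') converge absolutely, then exp_{s,t}(z,φ)·exp_{s,t}(−z,φ') = 1. -/

import Mathlib

open scoped BigOperators

noncomputable section

/-- The Lucas sequence `{n}_{s,t}`. -/
def lucasSeq (s t : ℂ) : ℕ → ℂ
  | 0 => 0
  | 1 => 1
  | n + 2 => s * lucasSeq s t (n + 1) + t * lucasSeq s t n

/-- The Lucastorial `{n}_{s,t}!`. -/
def lucasFact (s t : ℂ) : ℕ → ℂ
  | 0 => 1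
  | n + 1 => lucasFact s t n * lucasSeq s t (n + 1)

/-- The Lucasnomial coefficient `{n choose k}_{s,t}`. -/
def lucasBinom (s t : ℂ) (n k : ℕ) : ℂ :=
  lucasFact s t n / (lucasFact s t k * lucasFact s t (n - k))

/-- The `(u,v)`-deformed Lucasnomial power `(x ⊕_{u,v} y)^{(n)}`. -/
def lucasPow (s t u v x y : ℂ) (n : ℕ) : ℂ :=
  ∑ k ∈ Finset.range (n + 1),
    lucasBinom s t n k * u ^ ((n - k).choose 2) * v ^ (k.choose 2) * x ^ (n - k) * y ^ k

/-- The Lucas-derivative with respect to the roots `p = φ`, `q = φ'`. -/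
def lucasDeriv (p q : ℂ) (f : ℂ → ℂ) (x : ℂ) : ℂ :=
  (f (p * x) - f (q * x)) / ((p - q) * x)

/-- The Lucas-derivative, extended by `0` at `0`, as an operator suitable for iteration. -/
def lucasDeriv0 (p q : ℂ) (f : ℂ → ℂ) : ℂ → ℂ :=
  fun x => if x = 0 then 0 else (f (p * x) - f (q * x)) / ((p - q) * x)

/-- The Lucas-Pantograph exponential `exp_{s,t}(z,u)`. -/
def lucasExp (s t u z : ℂ) : ℂ :=
  ∑' n : ℕ, u ^ (n.choose 2) * z ^ n / lucasFact s t n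

/-- The Lucas-Pantograph sine `sin_{s,t}(z,u)`. -/
def lucasSin (s t u z : ℂ) : ℂ :=
  ∑' n : ℕ, (-1 : ℂ) ^ n * u ^ ((2 * n + 1).choose 2) * z ^ (2 * n + 1) / lucasFact s t (2 * n + 1)

/-- The Lucas-Pantograph cosine `cos_{s,t}(z,u)`. -/
def lucasCos (s t u z : ℂ) : ℂ :=
  ∑' n : ℕ, (-1 : ℂ) ^ n * u ^ ((2 * n).choose 2) * z ^ (2 * n) / lucasFact s t (2 * n)

lemma lucas_binet (s t d : ℂ) (hd : d ^ 2 = s ^ 2 + 4 * t) (hd0 : d ≠ 0) (n : ℕ) :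
    lucasSeq s t n = (((s + d) / 2) ^ n - ((s - d) / 2) ^ n) / d := by
  induction n using Nat.twoStepInduction with
  | zero => simp [lucasSeq]
  | one => simp [lucasSeq]; field_simp; ring
  | more n ih1 ih2 =>
    have hφ : ((s + d) / 2) ^ (n + 2) = s * ((s + d) / 2) ^ (n + 1) + t * ((s + d) / 2) ^ n := by
      have h2 : ((s + d) / 2) ^ 2 = s * ((s + d) / 2) + t := by
        linear_combination hd / 4
      calc ((s + d) / 2) ^ (n + 2) = ((s + d) / 2) ^ n * ((s + d) / 2) ^ 2 := by ring
        _ = _ := by rw [h2]; ring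
    have hψ : ((s - d) / 2) ^ (n + 2) = s * ((s - d) / 2) ^ (n + 1) + t * ((s - d) / 2) ^ n := by
      have h2 : ((s - d) / 2) ^ 2 = s * ((s - d) / 2) + t := by
        linear_combination hd / 4
      calc ((s - d) / 2) ^ (n + 2) = ((s - d) / 2) ^ n * ((s - d) / 2) ^ 2 := by ring
        _ = _ := by rw [h2]; ring
    show s * lucasSeq s t (n + 1) + t * lucasSeq s t n = _
    rw [ih1, ih2, hφ, hψ]
    field_simp
    ring

lemma lucas_add (s t d : ℂ) (hd : d ^ 2 = s ^ 2 + 4 * t) (hd0 : d ≠ 0) (i j : ℕ) :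
    lucasSeq s t (i + j) =
      ((s - d) / 2) ^ j * lucasSeq s t i + ((s + d) / 2) ^ i * lucasSeq s t j := by
  rw [lucas_binet s t d hd hd0, lucas_binet s t d hd hd0, lucas_binet s t d hd hd0]
  field_simp
  ring

lemma lucasFact_ne_zero (s t : ℂ) (hL : ∀ n : ℕ, 1 ≤ n → lucasSeq s t n ≠ 0) (n : ℕ) :
    lucasFact s t n ≠ 0 := by
  induction n with
  | zero => simp [lucasFact]
  | succ n ih =>
    show lucasFact s t n * lucasSeq s t (n + 1) ≠ 0
    exact mul_ne_zero ih (hL (n + 1) (by omega))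

lemma choose_two_succ (m : ℕ) : (m + 1).choose 2 = m.choose 2 + m := by
  rw [show (2:ℕ) = Nat.succ 1 from rfl, Nat.choose_succ_succ, Nat.choose_one_right]
  omega

lemma lucas_key (s t d : ℂ) (hd : d ^ 2 = s ^ 2 + 4 * t) (hd0 : d ≠ 0)
    (hL : ∀ n : ℕ, 1 ≤ n → lucasSeq s t n ≠ 0) (n : ℕ) :
    ∑ k ∈ Finset.range (n + 2),
      (-1 : ℂ) ^ (n + 1 - k) * ((s + d) / 2) ^ (k.choose 2) *
        ((s - d) / 2) ^ ((n + 1 - k).choose 2) /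
        (lucasFact s t k * lucasFact s t (n + 1 - k)) = 0 := by
  set φ := (s + d) / 2 with hφdef
  set ψ := (s - d) / 2 with hψdef
  set L := lucasSeq s t with hLdef
  set F := lucasFact s t with hFdef
  have hLn : L (n + 1) ≠ 0 := hL (n + 1) (by omega)
  have hFne : ∀ m, F m ≠ 0 := lucasFact_ne_zero s t hL
  have hFsucc : ∀ m, F (m + 1) = F m * L (m + 1) := fun m => rfl
  have hA : ∀ k ∈ Finset.range (n + 2),
      (-1 : ℂ) ^ (n + 1 - k) * φ ^ (k.choose 2) * ψ ^ ((n + 1 - k).choose 2) /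
        (F k * F (n + 1 - k))
      = (-1 : ℂ) ^ (n + 1 - k) * φ ^ (k.choose 2) * ψ ^ ((n + 1 - k).choose 2) *
          (ψ ^ (n + 1 - k) * L k) / (L (n + 1) * F k * F (n + 1 - k))
        + (-1 : ℂ) ^ (n + 1 - k) * φ ^ (k.choose 2) * ψ ^ ((n + 1 - k).choose 2) *
          (φ ^ k * L (n + 1 - k)) / (L (n + 1) * F k * F (n + 1 - k)) := by
    intro k hk
    simp only [Finset.mem_range] at hk
    have hadd : L (n + 1) = ψ ^ (n + 1 - k) * L k + φ ^ k * L (n + 1 - k) := by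
      have h := lucas_add s t d hd hd0 k (n + 1 - k)
      rw [show k + (n + 1 - k) = n + 1 from by omega] at h
      exact h
    rw [← add_div, ← mul_add, ← hadd]
    field_simp [hFne k, hFne (n + 1 - k), hLn]
  rw [Finset.sum_congr rfl hA, Finset.sum_add_distrib]
  rw [Finset.sum_range_succ' _ (n + 1)]
  rw [Finset.sum_range_succ _ (n + 1)]
  have hA0 : (-1 : ℂ) ^ (n + 1 - 0) * φ ^ (Nat.choose 0 2) * ψ ^ ((n + 1 - 0).choose 2) *
      (ψ ^ (n + 1 - 0) * L 0) / (L (n + 1) * F 0 * F (n + 1 - 0)) = 0 := by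
    have : L 0 = 0 := rfl
    rw [this]
    simp
  have hB0 : (-1 : ℂ) ^ (n + 1 - (n + 1)) * φ ^ ((n + 1).choose 2) *
      ψ ^ ((n + 1 - (n + 1)).choose 2) * (φ ^ (n + 1) * L (n + 1 - (n + 1))) /
      (L (n + 1) * F (n + 1) * F (n + 1 - (n + 1))) = 0 := by
    rw [Nat.sub_self]
    have : L 0 = 0 := rfl
    rw [this]
    simp
  rw [hA0, hB0, add_zero, add_zero, ← Finset.sum_add_distrib]
  apply Finset.sum_eq_zero
  intro i hi
  simp only [Finset.mem_range] at hi
  have hi' : i ≤ n := by omega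
  have h1 : n + 1 - (i + 1) = n - i := by omega
  have h2 : n + 1 - i = (n - i) + 1 := by omega
  rw [h1, h2, choose_two_succ i, choose_two_succ (n - i), hFsucc i, hFsucc (n - i)]
  have hLi : L (i + 1) ≠ 0 := hL (i + 1) (by omega)
  have hLni : L ((n - i) + 1) ≠ 0 := hL ((n - i) + 1) (by omega)
  field_simp [hFne i, hFne (n - i), hLn, hLi, hLni]
  ring

/-- Inverse relation for the `φ`- and `φ'`-exponentials, where `φ = (s+d)/2`, `φ' = (s-d)/2`
with `d` a square root of `s²+4t ≠ 0`. -/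
theorem lucasExp_phi_mul_inv (s t : ℂ) (hs : s ≠ 0) (ht : t ≠ 0)
    (hst : s ^ 2 + 4 * t ≠ 0) (hL : ∀ n : ℕ, 1 ≤ n → lucasSeq s t n ≠ 0)
    (d : ℂ) (hd : d ^ 2 = s ^ 2 + 4 * t) (z : ℂ)
    (hconv1 : Summable fun n : ℕ =>
      ‖((s + d) / 2) ^ (n.choose 2) * z ^ n / lucasFact s t n‖)
    (hconv2 : Summable fun n : ℕ =>
      ‖((s - d) / 2) ^ (n.choose 2) * (-z) ^ n / lucasFact s t n‖) :
    lucasExp s t ((s + d) / 2) z * lucasExp s t ((s - d) / 2) (-z) = 1 := by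
  have hd0 : d ≠ 0 := by
    intro h
    apply hst
    rw [← hd, h]
    ring
  rw [lucasExp, lucasExp,
    tsum_mul_tsum_eq_tsum_sum_antidiagonal_of_summable_norm hconv1 hconv2]
  have hinner : ∀ n : ℕ, (∑ kl ∈ Finset.HasAntidiagonal.antidiagonal n,
      ((s + d) / 2) ^ (kl.1.choose 2) * z ^ kl.1 / lucasFact s t kl.1 *
        (((s - d) / 2) ^ (kl.2.choose 2) * (-z) ^ kl.2 / lucasFact s t kl.2))
      = if n = 0 then 1 else 0 := by
    intro n
    match n with
    | 0 => simp [lucasFact]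
    | (n + 1) =>
      rw [if_neg (Nat.succ_ne_zero n), Finset.Nat.sum_antidiagonal_eq_sum_range_succ_mk]
      have hkey := lucas_key s t d hd hd0 hL n
      have hterm : ∀ k ∈ Finset.range (n + 2),
          ((s + d) / 2) ^ (k.choose 2) * z ^ k / lucasFact s t k *
            (((s - d) / 2) ^ ((n + 1 - k).choose 2) * (-z) ^ (n + 1 - k) /
              lucasFact s t (n + 1 - k))
          = z ^ (n + 1) * ((-1 : ℂ) ^ (n + 1 - k) * ((s + d) / 2) ^ (k.choose 2) *
              ((s - d) / 2) ^ ((n + 1 - k).choose 2) /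
              (lucasFact s t k * lucasFact s t (n + 1 - k))) := by
        intro k hk
        simp only [Finset.mem_range] at hk
        obtain ⟨m, hm1, hm2⟩ : ∃ m, n + 1 - k = m ∧ n + 1 = k + m :=
          ⟨n + 1 - k, rfl, by omega⟩
        rw [hm1, hm2, neg_pow, pow_add]
        ring
      rw [Finset.sum_congr rfl hterm, ← Finset.mul_sum, hkey, mul_zero]
  rw [tsum_congr hinner]
  exact tsum_ite_eq 0 1
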